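/- arXiv:1804.06075 — 2 statements merged into one kernel-verified Lean document; each statement's English description precedes it below -/
import Mathlib

section
/- Ward–Takahashi identity summed over colours: for all indices p₁, p₂ ∈ {0,…,N} with p₁ ≠ p₂, the following identity of formal power series in λ' (with smooth-function coefficients) holds: Σ_{a=1}^{3} Σ_{m=0}^{N} ∂²Z/(∂J^a_{p₁m} ∂J^a_{mp₂}) = (V/(E_{p₁} − E_{p₂})) Σ_{a=1}^{3} Σ_{m=0}^{N} ( J^a_{mp₁} ∂Z/∂J^a_{mp₂} − J^a_{p₂m} ∂Z/∂J^a_{p₁m} ). -/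
open MeasureTheory PowerSeries Finset

noncomputable section

/-- Index set for the sources `J^a_{nm}`: a colour `a ∈ {1,2,3}` and a pair of
matrix indices `n, m ∈ {0,…,N}`. -/
abbrev SrcIdx (N : ℕ) := Fin 3 × Fin (N + 1) × Fin (N + 1)

/-- The ring of (smooth-)function coefficients: functions of the sources `J`. -/
abbrev Fn (N : ℕ) := (SrcIdx N → ℝ) → ℝ

/-- `σ_{abc} = 1` if the colours `a, b, c` are pairwise distinct, `0` otherwise. -/
def sigma3 (a b c : Fin 3) : ℝ := if a ≠ b ∧ b ≠ c ∧ a ≠ c then 1 else 0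

/-- Eigenvalues of the external field: `E_m = m/V + μ²/2`. -/
def Eev (N : ℕ) (V μsq : ℝ) (m : Fin (N + 1)) : ℝ := (m : ℝ) / V + μsq / 2

/-- `H_{nm} = E_n + E_m`. -/
def Hev (N : ℕ) (V μsq : ℝ) (n m : Fin (N + 1)) : ℝ := Eev N V μsq n + Eev N V μsq m

/-- The free partition function
`Z_free[J] = exp(Σ_a Σ_{n,m} (V/(2H_{nm})) J^a_{nm} J^a_{mn})`. -/
def Zfree (N : ℕ) (V μsq : ℝ) : Fn N := fun J =>
  Real.exp (∑ a : Fin 3, ∑ n : Fin (N + 1), ∑ m : Fin (N + 1),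
    V / (2 * Hev N V μsq n m) * (J (a, n, m) * J (a, m, n)))

/-- Partial derivative `∂/∂J^a_{nm}` of a function of the sources. -/
def pd (N : ℕ) (i : SrcIdx N) (f : Fn N) : Fn N :=
  fun J => fderiv ℝ f J (Pi.single i 1)

/-- The interaction operator
`D = (1/(3V²)) Σ_{a,b,c} Σ_{n,m,l} σ_{abc} ∂³/(∂J^a_{nm} ∂J^b_{ml} ∂J^c_{ln})`. -/
def Dop (N : ℕ) (V : ℝ) (f : Fn N) : Fn N := fun J =>
  (1 / (3 * V ^ 2)) *
    ∑ a : Fin 3, ∑ b : Fin 3, ∑ c : Fin 3,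
      ∑ n : Fin (N + 1), ∑ m : Fin (N + 1), ∑ l : Fin (N + 1),
        sigma3 a b c * pd N (a, n, m) (pd N (b, m, l) (pd N (c, l, n) f)) J

/-- The partition function `Z[J] = Σ_k ((−1)^k/k!) λ'^k D^k Z_free[J]` as a formal
power series in the coupling constant `λ'` with function coefficients. -/
def Zser (N : ℕ) (V μsq : ℝ) : PowerSeries (Fn N) :=
  PowerSeries.mk fun k => fun J =>
    ((-1 : ℝ) ^ k / (Nat.factorial k : ℝ)) * (Dop N V)^[k] (Zfree N V μsq) J

/-- Partial derivative `∂/∂J^a_{nm}` acting coefficientwise on a formal power series. -/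
def Pd (N : ℕ) (i : SrcIdx N) (S : PowerSeries (Fn N)) : PowerSeries (Fn N) :=
  PowerSeries.mk fun k => pd N i (PowerSeries.coeff k S)

/-- Coefficientwise multiplication by a function of the sources (in particular by a
coordinate function or by a real constant). -/
def Cf (N : ℕ) (g : Fn N) : PowerSeries (Fn N) := PowerSeries.C g

/-- Evaluation of every coefficient at `J = 0`, giving a series in `ℝ[[λ']]`. -/
def ev0 (N : ℕ) : PowerSeries (Fn N) →+* PowerSeries ℝ :=
  PowerSeries.map (Pi.evalRingHom (fun _ : SrcIdx N → ℝ => ℝ) 0)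

end

noncomputable section

namespace WT

variable {N : ℕ}

abbrev Sm (f : Fn N) : Prop := ContDiff ℝ (⊤ : ℕ∞) f

lemma Sm.diff {f : Fn N} (hf : Sm f) : Differentiable ℝ f :=
  hf.differentiable (by simp)

lemma pd_smooth {f : Fn N} (hf : Sm f) (i : SrcIdx N) : Sm (pd N i f) := by
  have h1 : ContDiff ℝ (⊤ : ℕ∞) (fderiv ℝ f) := by
    apply hf.fderiv_right
    exact le_of_eq (by simp)
  exact (ContinuousLinearMap.apply ℝ ℝ (Pi.single i 1)).contDiff.comp h1

lemma pd_add {f g : Fn N} (hf : Differentiable ℝ f) (hg : Differentiable ℝ g) (i : SrcIdx N) :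
    pd N i (fun J => f J + g J) = fun J => pd N i f J + pd N i g J := by
  funext J
  simp only [pd, fderiv_fun_add (hf J) (hg J), ContinuousLinearMap.add_apply]

lemma pd_sub {f g : Fn N} (hf : Differentiable ℝ f) (hg : Differentiable ℝ g) (i : SrcIdx N) :
    pd N i (fun J => f J - g J) = fun J => pd N i f J - pd N i g J := by
  funext J
  simp only [pd, fderiv_fun_sub (hf J) (hg J), ContinuousLinearMap.sub_apply]

lemma pd_const_mul {f : Fn N} (hf : Differentiable ℝ f) (r : ℝ) (i : SrcIdx N) :
    pd N i (fun J => r * f J) = fun J => r * pd N i f J := by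
  funext J
  simp only [pd, fderiv_const_mul (hf J), ContinuousLinearMap.smul_apply, smul_eq_mul]

lemma pd_sum {α : Type*} {s : Finset α} {f : α → Fn N}
    (hf : ∀ a ∈ s, Differentiable ℝ (f a)) (i : SrcIdx N) :
    pd N i (fun J => ∑ a ∈ s, f a J) = fun J => ∑ a ∈ s, pd N i (f a) J := by
  funext J
  simp only [pd, fderiv_fun_sum (fun a ha => (hf a ha) J), ContinuousLinearMap.sum_apply]

lemma diff_coord (j : SrcIdx N) : Differentiable ℝ (fun J : SrcIdx N → ℝ => J j) :=
  differentiable_pi.mp differentiable_id j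

lemma sm_coord (j : SrcIdx N) : Sm (fun J : SrcIdx N → ℝ => J j) :=
  (ContinuousLinearMap.proj j : (SrcIdx N → ℝ) →L[ℝ] ℝ).contDiff

lemma sm_coord_mul {f : Fn N} (hf : Sm f) (j : SrcIdx N) :
    Sm (fun J => J j * f J) := (sm_coord j).mul hf

lemma sm_const_mul {f : Fn N} (hf : Sm f) (r : ℝ) : Sm (fun J => r * f J) :=
  contDiff_const.mul hf

lemma sm_sum {α : Type*} {s : Finset α} {f : α → Fn N}
    (hf : ∀ a ∈ s, Sm (f a)) : Sm (fun J => ∑ a ∈ s, f a J) :=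
  ContDiff.sum hf

lemma sm_sub {f g : Fn N} (hf : Sm f) (hg : Sm g) : Sm (fun J => f J - g J) :=
  hf.sub hg

lemma pd_coord_mul {f : Fn N} (hf : Differentiable ℝ f) (i j : SrcIdx N) :
    pd N i (fun J => J j * f J)
      = fun J => (if i = j then f J else 0) + J j * pd N i f J := by
  funext J
  have hc : HasFDerivAt (fun J : SrcIdx N → ℝ => J j)
      (ContinuousLinearMap.proj j : (SrcIdx N → ℝ) →L[ℝ] ℝ) J :=
    (ContinuousLinearMap.proj j : (SrcIdx N → ℝ) →L[ℝ] ℝ).hasFDerivAt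
  have h := (hc.fun_mul (hf J).hasFDerivAt).fderiv
  simp only [pd, h]
  simp only [ContinuousLinearMap.add_apply, ContinuousLinearMap.smul_apply,
    ContinuousLinearMap.proj_apply, Pi.single_apply, smul_eq_mul]
  by_cases h' : i = j
  · subst h'; simp; ring
  · have : ¬ (j = i) := fun e => h' e.symm
    simp [h', this]

lemma pd_ite {f : Fn N} (hf : Differentiable ℝ f) (c : Prop) [Decidable c] (i : SrcIdx N) :
    pd N i (fun J => if c then f J else 0) = fun J => if c then pd N i f J else 0 := by
  by_cases h : c
  · simp only [h, if_true]
  · simp only [h, if_false]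
    funext J
    simp [pd, fderiv_const]

lemma pd_comm {f : Fn N} (hf : Sm f) (i j : SrcIdx N) :
    pd N i (pd N j f) = pd N j (pd N i f) := by
  funext J
  have hF : ContDiff ℝ (⊤ : ℕ∞) (fderiv ℝ f) := by
    apply hf.fderiv_right; exact le_of_eq (by simp)
  have hFd : DifferentiableAt ℝ (fderiv ℝ f) J := (hF.differentiable (by simp)) J
  have key : ∀ v : SrcIdx N → ℝ, fderiv ℝ (fun x => fderiv ℝ f x v) J
      = (fderiv ℝ (fderiv ℝ f) J).flip v := by
    intro v
    have := fderiv_clm_apply (c := fderiv ℝ f) (u := fun _ => v) hFd (differentiableAt_const v)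
    simpa using this
  have hsym : ∀ v w, fderiv ℝ (fderiv ℝ f) J v w = fderiv ℝ (fderiv ℝ f) J w v := by
    apply second_derivative_symmetric (f := f) (f' := fderiv ℝ f)
    · intro y; exact (hf.diff y).hasFDerivAt
    · exact hFd.hasFDerivAt
  show fderiv ℝ (fun x => fderiv ℝ f x (Pi.single j 1)) J (Pi.single i 1)
      = fderiv ℝ (fun x => fderiv ℝ f x (Pi.single i 1)) J (Pi.single j 1)
  rw [key, key]
  simp only [ContinuousLinearMap.flip_apply]
  exact hsym _ _

lemma pd3_swap23 {f : Fn N} (hf : Sm f) (x y z : SrcIdx N) :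
    pd N x (pd N y (pd N z f)) = pd N x (pd N z (pd N y f)) := by
  rw [pd_comm hf]

lemma pd3_rot {f : Fn N} (hf : Sm f) (x y z : SrcIdx N) :
    pd N x (pd N y (pd N z f)) = pd N y (pd N z (pd N x f)) := by
  rw [pd_comm (pd_smooth hf z) x y, pd_comm hf z x]

lemma pd3_swap13 {f : Fn N} (hf : Sm f) (x y z : SrcIdx N) :
    pd N x (pd N y (pd N z f)) = pd N z (pd N y (pd N x f)) := by
  rw [pd3_rot hf, pd3_rot hf, pd3_swap23 hf]

end WT

end
noncomputable section
namespace WT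
variable {N : ℕ}

def sw (i : SrcIdx N) : SrcIdx N := (i.1, i.2.2, i.2.1)

@[simp] lemma sw_sw (i : SrcIdx N) : sw (sw i) = i := rfl

def cf (N : ℕ) (V μsq : ℝ) (i : SrcIdx N) : ℝ := V / (2 * Hev N V μsq i.2.1 i.2.2)

lemma cf_sw (V μsq : ℝ) (i : SrcIdx N) : cf N V μsq (sw i) = cf N V μsq i := by
  simp [cf, sw, Hev, add_comm]

def Q (N : ℕ) (V μsq : ℝ) : Fn N := fun J => ∑ i : SrcIdx N, cf N V μsq i * (J i * J (sw i))

lemma Zfree_eq (V μsq : ℝ) : Zfree N V μsq = fun J => Real.exp (Q N V μsq J) := by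
  funext J
  unfold Zfree Q cf sw
  rw [Fintype.sum_prod_type]
  congr 1
  refine Finset.sum_congr rfl fun a _ => ?_
  rw [Fintype.sum_prod_type]

def proj' (i : SrcIdx N) : (SrcIdx N → ℝ) →L[ℝ] ℝ := ContinuousLinearMap.proj i

def Q' (N : ℕ) (V μsq : ℝ) (J : SrcIdx N → ℝ) : (SrcIdx N → ℝ) →L[ℝ] ℝ :=
  ∑ i : SrcIdx N, cf N V μsq i • (J (sw i) • proj' i + J i • proj' (sw i))

lemma hasFDerivAt_Q (V μsq : ℝ) (J : SrcIdx N → ℝ) :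
    HasFDerivAt (Q N V μsq) (Q' N V μsq J) J := by
  apply HasFDerivAt.fun_sum
  intro i _
  have h1 : HasFDerivAt (fun J : SrcIdx N → ℝ => J i) (proj' i) J :=
    (proj' i).hasFDerivAt
  have h2 : HasFDerivAt (fun J : SrcIdx N → ℝ => J (sw i)) (proj' (sw i)) J :=
    (proj' (sw i)).hasFDerivAt
  have := (h1.mul h2).const_mul (cf N V μsq i)
  simpa [smul_add, add_comm] using this

lemma sm_Zfree (V μsq : ℝ) : Sm (Zfree N V μsq) := by
  rw [Zfree_eq]
  apply Real.contDiff_exp.comp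
  apply ContDiff.sum
  intro i _
  exact contDiff_const.mul ((sm_coord i).mul (sm_coord (sw i)))

lemma Q'_single (V μsq : ℝ) (J : SrcIdx N → ℝ) (i : SrcIdx N) :
    Q' N V μsq J (Pi.single i 1) = 2 * cf N V μsq i * J (sw i) := by
  unfold Q'
  rw [ContinuousLinearMap.sum_apply]
  have hterm : ∀ j : SrcIdx N,
      (cf N V μsq j • (J (sw j) • proj' j + J j • proj' (sw j))) (Pi.single i 1)
      = (if j = i then cf N V μsq j * J (sw j) else 0)
        + (if j = sw i then cf N V μsq j * J j else 0) := by
    intro j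
    simp only [ContinuousLinearMap.smul_apply, ContinuousLinearMap.add_apply, proj',
      ContinuousLinearMap.proj_apply, Pi.single_apply, smul_eq_mul]
    have hiff : (sw j = i) ↔ (j = sw i) := by
      constructor
      · intro h; rw [← h]; rfl
      · intro h; rw [h]; rfl
    by_cases h1 : j = i <;> by_cases h2 : j = sw i <;>
      simp [h1, h2, hiff, mul_add, eq_comm] <;> ring
  rw [Finset.sum_congr rfl (fun j _ => hterm j)]
  rw [Finset.sum_add_distrib, Finset.sum_ite_eq' Finset.univ i,
    Finset.sum_ite_eq' Finset.univ (sw i)]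
  simp [cf_sw]
  ring

lemma pd_Zfree (V μsq : ℝ) (i : SrcIdx N) :
    pd N i (Zfree N V μsq)
      = fun J => 2 * cf N V μsq i * (J (sw i) * Zfree N V μsq J) := by
  funext J
  have h : HasFDerivAt (Zfree N V μsq) (Real.exp (Q N V μsq J) • Q' N V μsq J) J := by
    rw [Zfree_eq]; exact (hasFDerivAt_Q V μsq J).exp
  rw [pd, h.fderiv]
  simp only [ContinuousLinearMap.smul_apply, smul_eq_mul, Q'_single, Zfree_eq]
  ring

/-! ### Flattened interaction operator -/

abbrev T6 (N : ℕ) := (Fin 3 × Fin 3 × Fin 3) × (Fin (N + 1) × Fin (N + 1) × Fin (N + 1))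

def ix1 (t : T6 N) : SrcIdx N := (t.1.1, t.2.1, t.2.2.1)
def ix2 (t : T6 N) : SrcIdx N := (t.1.2.1, t.2.2.1, t.2.2.2)
def ix3 (t : T6 N) : SrcIdx N := (t.1.2.2, t.2.2.2, t.2.1)
def sg (t : T6 N) : ℝ := sigma3 t.1.1 t.1.2.1 t.1.2.2

lemma Dop_eq (V : ℝ) (f : Fn N) :
    Dop N V f = fun J =>
      (1 / (3 * V ^ 2)) * ∑ t : T6 N, sg t * pd N (ix1 t) (pd N (ix2 t) (pd N (ix3 t) f)) J := by
  funext J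
  unfold Dop
  simp only [Fintype.sum_prod_type]
  rfl

lemma sm_pd3 {f : Fn N} (hf : Sm f) (i j k : SrcIdx N) :
    Sm (pd N i (pd N j (pd N k f))) :=
  pd_smooth (pd_smooth (pd_smooth hf k) j) i

lemma sm_Dop {f : Fn N} (hf : Sm f) (V : ℝ) : Sm (Dop N V f) := by
  rw [Dop_eq]
  exact sm_const_mul (sm_sum fun t _ => sm_const_mul (sm_pd3 hf _ _ _) _) _

lemma pd_Dop_comm {f : Fn N} (hf : Sm f) (V : ℝ) (i : SrcIdx N) :
    pd N i (Dop N V f) = Dop N V (pd N i f) := by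
  rw [Dop_eq, Dop_eq]
  rw [pd_const_mul (Differentiable.fun_sum fun t _ =>
    (Sm.diff (sm_const_mul (sm_pd3 hf _ _ _) _))) _ i]
  congr 1
  funext J
  congr 1
  rw [pd_sum (fun t _ => Sm.diff (sm_const_mul (sm_pd3 hf _ _ _) _)) i]
  refine Finset.sum_congr rfl fun t _ => ?_
  rw [pd_const_mul (Sm.diff (sm_pd3 hf _ _ _)) _ i]
  congr 1
  rw [pd_comm (pd_smooth (pd_smooth hf (ix3 t)) (ix2 t)) i (ix1 t)]
  rw [pd_comm (pd_smooth hf (ix3 t)) i (ix2 t)]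
  rw [pd_comm hf i (ix3 t)]

end WT
end
noncomputable section
namespace WT
variable {N : ℕ}

lemma diff_ite {f : Fn N} (hf : Differentiable ℝ f) (c : Prop) [Decidable c] :
    Differentiable ℝ (fun J : SrcIdx N → ℝ => if c then f J else 0) := by
  by_cases h : c
  · simpa [h] using hf
  · simpa [h] using (differentiable_const (0 : ℝ))

lemma pd3_coord_mul {g : Fn N} (hg : Sm g) (i1 i2 i3 j : SrcIdx N) :
    pd N i1 (pd N i2 (pd N i3 (fun J => J j * g J)))
      = fun J => J j * pd N i1 (pd N i2 (pd N i3 g)) J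
          + ((if i1 = j then pd N i2 (pd N i3 g) J else 0)
            + (if i2 = j then pd N i1 (pd N i3 g) J else 0)
            + (if i3 = j then pd N i1 (pd N i2 g) J else 0)) := by
  rw [pd_coord_mul hg.diff i3 j]
  rw [pd_add (diff_ite hg.diff _) (sm_coord_mul (pd_smooth hg i3) j).diff i2]
  rw [pd_ite hg.diff _ i2, pd_coord_mul (pd_smooth hg i3).diff i2 j]
  have hd1 : Differentiable ℝ (fun J : SrcIdx N → ℝ => if i3 = j then pd N i2 g J else 0) :=
    diff_ite (pd_smooth hg i2).diff _
  have hd2 : Differentiable ℝ (fun J : SrcIdx N → ℝ =>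
      (if i2 = j then pd N i3 g J else 0) + J j * pd N i2 (pd N i3 g) J) :=
    (diff_ite (pd_smooth hg i3).diff _).add (sm_coord_mul (pd_smooth (pd_smooth hg i3) i2) j).diff
  rw [pd_add hd1 hd2 i1, pd_ite (pd_smooth hg i2).diff _ i1]
  rw [pd_add (diff_ite (pd_smooth hg i3).diff _)
    (sm_coord_mul (pd_smooth (pd_smooth hg i3) i2) j).diff i1]
  rw [pd_ite (pd_smooth hg i3).diff _ i1,
    pd_coord_mul (pd_smooth (pd_smooth hg i3) i2).diff i1 j]
  funext J
  ring

/-- The extra (delta) term produced when `Dop` is applied to a coordinate multiple. -/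
def Del (N : ℕ) (V : ℝ) (g : Fn N) (j : SrcIdx N) : Fn N := fun J =>
  (1 / (3 * V ^ 2)) * ∑ t : T6 N, sg t *
    ((if ix1 t = j then pd N (ix2 t) (pd N (ix3 t) g) J else 0)
      + (if ix2 t = j then pd N (ix1 t) (pd N (ix3 t) g) J else 0)
      + (if ix3 t = j then pd N (ix1 t) (pd N (ix2 t) g) J else 0))

lemma Dop_coord_mul {g : Fn N} (hg : Sm g) (V : ℝ) (j : SrcIdx N) :
    Dop N V (fun J => J j * g J)
      = fun J => J j * Dop N V g J + Del N V g j J := by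
  rw [Dop_eq, Dop_eq]
  funext J
  unfold Del
  have key : ∀ t : T6 N,
      sg t * pd N (ix1 t) (pd N (ix2 t) (pd N (ix3 t) (fun J' => J' j * g J'))) J
      = sg t * (J j * pd N (ix1 t) (pd N (ix2 t) (pd N (ix3 t) g)) J)
        + sg t * ((if ix1 t = j then pd N (ix2 t) (pd N (ix3 t) g) J else 0)
            + (if ix2 t = j then pd N (ix1 t) (pd N (ix3 t) g) J else 0)
            + (if ix3 t = j then pd N (ix1 t) (pd N (ix2 t) g) J else 0)) := by
    intro t
    rw [congrFun (pd3_coord_mul hg (ix1 t) (ix2 t) (ix3 t) j) J]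
    ring
  rw [Finset.sum_congr rfl (fun t _ => key t), Finset.sum_add_distrib]
  have h2 : ∑ t : T6 N, sg t * (J j * pd N (ix1 t) (pd N (ix2 t) (pd N (ix3 t) g)) J)
      = J j * ∑ t : T6 N, sg t * pd N (ix1 t) (pd N (ix2 t) (pd N (ix3 t) g)) J := by
    rw [Finset.mul_sum]
    exact Finset.sum_congr rfl fun t _ => by ring
  rw [h2]
  ring

lemma sum_delta_fst {α β : Type*} [Fintype α] [Fintype β] [DecidableEq α] (v : α)
    (F : α → β → ℝ) :
    ∑ p : α × β, (if p.1 = v then F p.1 p.2 else 0) = ∑ b : β, F v b := by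
  classical
  rw [Fintype.sum_prod_type]
  have h : ∀ a : α, (∑ b : β, if a = v then F a b else 0)
      = if a = v then ∑ b : β, F v b else 0 := by
    intro a
    split <;> simp_all
  rw [Finset.sum_congr rfl (fun a _ => h a)]
  simp [Finset.sum_ite_eq' Finset.univ v]

abbrev R3 (N : ℕ) := Fin 3 × Fin 3 × Fin (N + 1)

def e1 : T6 N ≃ SrcIdx N × R3 N where
  toFun t := ((t.1.1, t.2.1, t.2.2.1), (t.1.2.1, t.1.2.2, t.2.2.2))
  invFun p := ((p.1.1, p.2.1, p.2.2.1), (p.1.2.1, p.1.2.2, p.2.2.2))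
  left_inv := by rintro ⟨⟨a, b, c⟩, ⟨n, m, l⟩⟩; rfl
  right_inv := by rintro ⟨⟨a, n, m⟩, ⟨b, c, l⟩⟩; rfl

def e2 : T6 N ≃ SrcIdx N × R3 N where
  toFun t := ((t.1.2.1, t.2.2.1, t.2.2.2), (t.1.1, t.1.2.2, t.2.1))
  invFun p := ((p.2.1, p.1.1, p.2.2.1), (p.2.2.2, p.1.2.1, p.1.2.2))
  left_inv := by rintro ⟨⟨a, b, c⟩, ⟨n, m, l⟩⟩; rfl
  right_inv := by rintro ⟨⟨b, m, l⟩, ⟨a, c, n⟩⟩; rfl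

def e3 : T6 N ≃ SrcIdx N × R3 N where
  toFun t := ((t.1.2.2, t.2.2.2, t.2.1), (t.1.1, t.1.2.1, t.2.2.1))
  invFun p := ((p.2.1, p.2.2.1, p.1.1), (p.1.2.2, p.2.2.2, p.1.2.1))
  left_inv := by rintro ⟨⟨a, b, c⟩, ⟨n, m, l⟩⟩; rfl
  right_inv := by rintro ⟨⟨c, l, n⟩, ⟨a, b, m⟩⟩; rfl

lemma collapse1 (g : Fn N) (j : SrcIdx N) (J : SrcIdx N → ℝ) :
    (∑ t : T6 N, sg t * (if ix1 t = j then pd N (ix2 t) (pd N (ix3 t) g) J else 0))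
    = ∑ r : R3 N, sigma3 j.1 r.1 r.2.1 *
        pd N (r.1, j.2.2, r.2.2) (pd N (r.2.1, r.2.2, j.2.1) g) J := by
  have := sum_delta_fst (α := SrcIdx N) (β := R3 N) j
    (fun v r => sigma3 v.1 r.1 r.2.1 * pd N (r.1, v.2.2, r.2.2) (pd N (r.2.1, r.2.2, v.2.1) g) J)
  rw [← this]
  apply Fintype.sum_equiv e1
  rintro ⟨⟨a, b, c⟩, ⟨n, m, l⟩⟩
  simp only [e1, Equiv.coe_fn_mk, sg, ix1, ix2, ix3, mul_ite, mul_zero]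
  split_ifs with hh <;> simp [hh]

lemma collapse2 (g : Fn N) (j : SrcIdx N) (J : SrcIdx N → ℝ) :
    (∑ t : T6 N, sg t * (if ix2 t = j then pd N (ix1 t) (pd N (ix3 t) g) J else 0))
    = ∑ r : R3 N, sigma3 r.1 j.1 r.2.1 *
        pd N (r.1, r.2.2, j.2.1) (pd N (r.2.1, j.2.2, r.2.2) g) J := by
  have := sum_delta_fst (α := SrcIdx N) (β := R3 N) j
    (fun v r => sigma3 r.1 v.1 r.2.1 * pd N (r.1, r.2.2, v.2.1) (pd N (r.2.1, v.2.2, r.2.2) g) J)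
  rw [← this]
  apply Fintype.sum_equiv e2
  rintro ⟨⟨a, b, c⟩, ⟨n, m, l⟩⟩
  simp only [e2, Equiv.coe_fn_mk, sg, ix1, ix2, ix3, mul_ite, mul_zero]
  split_ifs with hh <;> simp [hh]

lemma collapse3 (g : Fn N) (j : SrcIdx N) (J : SrcIdx N → ℝ) :
    (∑ t : T6 N, sg t * (if ix3 t = j then pd N (ix1 t) (pd N (ix2 t) g) J else 0))
    = ∑ r : R3 N, sigma3 r.1 r.2.1 j.1 *
        pd N (r.1, j.2.2, r.2.2) (pd N (r.2.1, r.2.2, j.2.1) g) J := by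
  have := sum_delta_fst (α := SrcIdx N) (β := R3 N) j
    (fun v r => sigma3 r.1 r.2.1 v.1 * pd N (r.1, v.2.2, r.2.2) (pd N (r.2.1, r.2.2, v.2.1) g) J)
  rw [← this]
  apply Fintype.sum_equiv e3
  rintro ⟨⟨a, b, c⟩, ⟨n, m, l⟩⟩
  simp only [e3, Equiv.coe_fn_mk, sg, ix1, ix2, ix3, mul_ite, mul_zero]
  split_ifs with hh <;> simp [hh]

end WT
end
noncomputable section
namespace WT
variable {N : ℕ}

lemma pd3_sum {α : Type*} {s : Finset α} {h : α → Fn N} (hh : ∀ a ∈ s, Sm (h a))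
    (i j k : SrcIdx N) :
    pd N i (pd N j (pd N k (fun J => ∑ a ∈ s, h a J)))
      = fun J => ∑ a ∈ s, pd N i (pd N j (pd N k (h a))) J := by
  rw [pd_sum (fun a ha => (hh a ha).diff) k]
  rw [pd_sum (fun a ha => (pd_smooth (hh a ha) k).diff) j]
  rw [pd_sum (fun a ha => (pd_smooth (pd_smooth (hh a ha) k) j).diff) i]

lemma pd3_sub {f g : Fn N} (hf : Sm f) (hg : Sm g) (i j k : SrcIdx N) :
    pd N i (pd N j (pd N k (fun J => f J - g J)))
      = fun J => pd N i (pd N j (pd N k f)) J - pd N i (pd N j (pd N k g)) J := by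
  rw [pd_sub hf.diff hg.diff k]
  rw [pd_sub (pd_smooth hf k).diff (pd_smooth hg k).diff j]
  rw [pd_sub (pd_smooth (pd_smooth hf k) j).diff (pd_smooth (pd_smooth hg k) j).diff i]

lemma pd3_const_mul {f : Fn N} (hf : Sm f) (r : ℝ) (i j k : SrcIdx N) :
    pd N i (pd N j (pd N k (fun J => r * f J)))
      = fun J => r * pd N i (pd N j (pd N k f)) J := by
  rw [pd_const_mul hf.diff r k, pd_const_mul (pd_smooth hf k).diff r j,
    pd_const_mul (pd_smooth (pd_smooth hf k) j).diff r i]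

lemma Dop_sum {α : Type*} {s : Finset α} {h : α → Fn N} (hh : ∀ a ∈ s, Sm (h a)) (V : ℝ) :
    Dop N V (fun J => ∑ a ∈ s, h a J) = fun J => ∑ a ∈ s, Dop N V (h a) J := by
  simp only [Dop_eq]
  funext J
  have step1 : ∀ t : T6 N, sg t * pd N (ix1 t) (pd N (ix2 t) (pd N (ix3 t)
      (fun J => ∑ a ∈ s, h a J))) J
      = ∑ a ∈ s, sg t * pd N (ix1 t) (pd N (ix2 t) (pd N (ix3 t) (h a))) J := by
    intro t
    rw [congrFun (pd3_sum hh (ix1 t) (ix2 t) (ix3 t)) J, Finset.mul_sum]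
  rw [Finset.sum_congr rfl (fun t _ => step1 t), Finset.sum_comm, Finset.mul_sum]

lemma Dop_sub {f g : Fn N} (hf : Sm f) (hg : Sm g) (V : ℝ) :
    Dop N V (fun J => f J - g J) = fun J => Dop N V f J - Dop N V g J := by
  simp only [Dop_eq]
  funext J
  have step1 : ∀ t : T6 N, sg t * pd N (ix1 t) (pd N (ix2 t) (pd N (ix3 t)
      (fun J => f J - g J))) J
      = sg t * pd N (ix1 t) (pd N (ix2 t) (pd N (ix3 t) f)) J
        - sg t * pd N (ix1 t) (pd N (ix2 t) (pd N (ix3 t) g)) J := by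
    intro t
    rw [congrFun (pd3_sub hf hg (ix1 t) (ix2 t) (ix3 t)) J]
    ring
  rw [Finset.sum_congr rfl (fun t _ => step1 t), Finset.sum_sub_distrib]
  ring

lemma Dop_const_mul {f : Fn N} (hf : Sm f) (r : ℝ) (V : ℝ) :
    Dop N V (fun J => r * f J) = fun J => r * Dop N V f J := by
  simp only [Dop_eq]
  funext J
  have step1 : ∀ t : T6 N, sg t * pd N (ix1 t) (pd N (ix2 t) (pd N (ix3 t)
      (fun J => r * f J))) J
      = r * (sg t * pd N (ix1 t) (pd N (ix2 t) (pd N (ix3 t) f)) J) := by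
    intro t
    rw [congrFun (pd3_const_mul hf r (ix1 t) (ix2 t) (ix3 t)) J]
    ring
  rw [Finset.sum_congr rfl (fun t _ => step1 t), ← Finset.mul_sum]
  ring

end WT
end
noncomputable section
namespace WT
variable {N : ℕ}

abbrev CM (N : ℕ) := Fin 3 × Fin (N + 1)

/-- Rotation generator applied to `f`. -/
def Tfun (N : ℕ) (p₁ p₂ : Fin (N + 1)) (f : Fn N) : Fn N := fun J =>
  ∑ x : CM N, (J (x.1, x.2, p₁) * pd N (x.1, x.2, p₂) f J
    - J (x.1, p₂, x.2) * pd N (x.1, p₁, x.2) f J)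

/-- Second-derivative operator applied to `f`. -/
def Lfun (N : ℕ) (p₁ p₂ : Fin (N + 1)) (f : Fn N) : Fn N := fun J =>
  ∑ x : CM N, pd N (x.1, p₁, x.2) (pd N (x.1, x.2, p₂) f) J

abbrev P5 (N : ℕ) := CM N × R3 N

def q1 : P5 N ≃ P5 N where
  toFun p := ((p.2.1, p.2.2.2), (p.1.1, p.2.2.1, p.1.2))
  invFun p := ((p.2.1, p.2.2.2), (p.1.1, p.2.2.1, p.1.2))
  left_inv := by rintro ⟨⟨α, m'⟩, ⟨b, c, l⟩⟩; rfl
  right_inv := by rintro ⟨⟨x1, x2⟩, ⟨v1, v2, v3⟩⟩; rfl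

def q2 : P5 N ≃ P5 N where
  toFun p := ((p.2.2.1, p.2.2.2), (p.2.1, p.1.1, p.1.2))
  invFun p := ((p.2.2.1, p.2.2.2), (p.2.1, p.1.1, p.1.2))
  left_inv := by rintro ⟨⟨α, m'⟩, ⟨a, c, n⟩⟩; rfl
  right_inv := by rintro ⟨⟨x1, x2⟩, ⟨v1, v2, v3⟩⟩; rfl

def q3 : P5 N ≃ P5 N where
  toFun p := ((p.2.1, p.2.2.2), (p.2.2.1, p.1.1, p.1.2))
  invFun p := ((p.2.2.1, p.2.2.2), (p.1.1, p.2.1, p.1.2))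
  left_inv := by rintro ⟨⟨α, m'⟩, ⟨a, b, m⟩⟩; rfl
  right_inv := by rintro ⟨⟨x1, x2⟩, ⟨v1, v2, v3⟩⟩; rfl

lemma cancel {f : Fn N} (hf : Sm f) (V : ℝ) (p₁ p₂ : Fin (N + 1)) (J : SrcIdx N → ℝ) :
    ∑ x : CM N, Del N V (pd N (x.1, x.2, p₂) f) (x.1, x.2, p₁) J
    = ∑ x : CM N, Del N V (pd N (x.1, p₁, x.2) f) (x.1, p₂, x.2) J := by
  unfold Del
  have expand : ∀ (g : Fn N) (j : SrcIdx N),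
      (1 / (3 * V ^ 2)) * ∑ t : T6 N, sg t *
        ((if ix1 t = j then pd N (ix2 t) (pd N (ix3 t) g) J else 0)
          + (if ix2 t = j then pd N (ix1 t) (pd N (ix3 t) g) J else 0)
          + (if ix3 t = j then pd N (ix1 t) (pd N (ix2 t) g) J else 0))
      = (1 / (3 * V ^ 2)) *
          ((∑ r : R3 N, sigma3 j.1 r.1 r.2.1 *
              pd N (r.1, j.2.2, r.2.2) (pd N (r.2.1, r.2.2, j.2.1) g) J)
          + (∑ r : R3 N, sigma3 r.1 j.1 r.2.1 *
              pd N (r.1, r.2.2, j.2.1) (pd N (r.2.1, j.2.2, r.2.2) g) J)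
          + (∑ r : R3 N, sigma3 r.1 r.2.1 j.1 *
              pd N (r.1, j.2.2, r.2.2) (pd N (r.2.1, r.2.2, j.2.1) g) J)) := by
    intro g j
    congr 1
    rw [← collapse1 g j J, ← collapse2 g j J, ← collapse3 g j J]
    rw [← Finset.sum_add_distrib, ← Finset.sum_add_distrib]
    exact Finset.sum_congr rfl fun t _ => by ring
  rw [Finset.sum_congr rfl (fun x _ => expand (pd N (x.1, x.2, p₂) f) (x.1, x.2, p₁))]
  conv_rhs => rw [Finset.sum_congr rfl (fun x _ => expand (pd N (x.1, p₁, x.2) f) (x.1, p₂, x.2))]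
  rw [← Finset.mul_sum, ← Finset.mul_sum]
  congr 1
  rw [Finset.sum_add_distrib, Finset.sum_add_distrib, Finset.sum_add_distrib,
    Finset.sum_add_distrib]
  have e : ∀ g : CM N → R3 N → ℝ, (∑ p : P5 N, g p.1 p.2) = ∑ x : CM N, ∑ r : R3 N, g x r := by
    intro g
    rw [Fintype.sum_prod_type]
  have hA1B2 : ∑ x : CM N, ∑ r : R3 N, sigma3 x.1 r.1 r.2.1 *
        pd N (r.1, p₁, r.2.2) (pd N (r.2.1, r.2.2, x.2) (pd N (x.1, x.2, p₂) f)) J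
      = ∑ x : CM N, ∑ r : R3 N, sigma3 r.1 x.1 r.2.1 *
        pd N (r.1, r.2.2, p₂) (pd N (r.2.1, x.2, r.2.2) (pd N (x.1, p₁, x.2) f)) J := by
    rw [← e (fun x r => sigma3 x.1 r.1 r.2.1 *
        pd N (r.1, p₁, r.2.2) (pd N (r.2.1, r.2.2, x.2) (pd N (x.1, x.2, p₂) f)) J),
      ← e (fun x r => sigma3 r.1 x.1 r.2.1 *
        pd N (r.1, r.2.2, p₂) (pd N (r.2.1, x.2, r.2.2) (pd N (x.1, p₁, x.2) f)) J)]
    apply Fintype.sum_equiv (q1 (N := N))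
    rintro ⟨⟨α, m'⟩, ⟨b, c, l⟩⟩
    simp only [q1, Equiv.coe_fn_mk]
    try dsimp only
    rw [congrFun (pd3_swap13 hf (b, p₁, l) (c, l, m') (α, m', p₂)) J]
  have hA2B3 : ∑ x : CM N, ∑ r : R3 N, sigma3 r.1 x.1 r.2.1 *
        pd N (r.1, r.2.2, x.2) (pd N (r.2.1, p₁, r.2.2) (pd N (x.1, x.2, p₂) f)) J
      = ∑ x : CM N, ∑ r : R3 N, sigma3 r.1 r.2.1 x.1 *
        pd N (r.1, x.2, r.2.2) (pd N (r.2.1, r.2.2, p₂) (pd N (x.1, p₁, x.2) f)) J := by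
    rw [← e (fun x r => sigma3 r.1 x.1 r.2.1 *
        pd N (r.1, r.2.2, x.2) (pd N (r.2.1, p₁, r.2.2) (pd N (x.1, x.2, p₂) f)) J),
      ← e (fun x r => sigma3 r.1 r.2.1 x.1 *
        pd N (r.1, x.2, r.2.2) (pd N (r.2.1, r.2.2, p₂) (pd N (x.1, p₁, x.2) f)) J)]
    apply Fintype.sum_equiv (q2 (N := N))
    rintro ⟨⟨α, m'⟩, ⟨a, c, n⟩⟩
    simp only [q2, Equiv.coe_fn_mk]
    try dsimp only
    rw [congrFun (pd3_swap23 hf (a, n, m') (c, p₁, n) (α, m', p₂)) J]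
  have hA3B1 : ∑ x : CM N, ∑ r : R3 N, sigma3 r.1 r.2.1 x.1 *
        pd N (r.1, p₁, r.2.2) (pd N (r.2.1, r.2.2, x.2) (pd N (x.1, x.2, p₂) f)) J
      = ∑ x : CM N, ∑ r : R3 N, sigma3 x.1 r.1 r.2.1 *
        pd N (r.1, x.2, r.2.2) (pd N (r.2.1, r.2.2, p₂) (pd N (x.1, p₁, x.2) f)) J := by
    rw [← e (fun x r => sigma3 r.1 r.2.1 x.1 *
        pd N (r.1, p₁, r.2.2) (pd N (r.2.1, r.2.2, x.2) (pd N (x.1, x.2, p₂) f)) J),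
      ← e (fun x r => sigma3 x.1 r.1 r.2.1 *
        pd N (r.1, x.2, r.2.2) (pd N (r.2.1, r.2.2, p₂) (pd N (x.1, p₁, x.2) f)) J)]
    apply Fintype.sum_equiv (q3 (N := N))
    rintro ⟨⟨α, m'⟩, ⟨a, b, m⟩⟩
    simp only [q3, Equiv.coe_fn_mk]
    try dsimp only
    rw [congrFun (pd3_rot hf (a, p₁, m) (b, m, m') (α, m', p₂)) J]
  rw [hA1B2, hA2B3, hA3B1]
  ring

end WT
end
noncomputable section
namespace WT
variable {N : ℕ}

lemma sm_Tfun {f : Fn N} (hf : Sm f) (p₁ p₂ : Fin (N + 1)) : Sm (Tfun N p₁ p₂ f) :=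
  sm_sum fun x _ => (sm_coord_mul (pd_smooth hf _) _).sub (sm_coord_mul (pd_smooth hf _) _)

lemma T_Dop_comm {f : Fn N} (hf : Sm f) (V : ℝ) (p₁ p₂ : Fin (N + 1)) :
    Dop N V (Tfun N p₁ p₂ f) = Tfun N p₁ p₂ (Dop N V f) := by
  have hsm : ∀ x : CM N, Sm (fun J => J (x.1, x.2, p₁) * pd N (x.1, x.2, p₂) f J
      - J (x.1, p₂, x.2) * pd N (x.1, p₁, x.2) f J) := fun x =>
    (sm_coord_mul (pd_smooth hf _) _).sub (sm_coord_mul (pd_smooth hf _) _)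
  unfold Tfun
  rw [Dop_sum (fun x _ => hsm x) V]
  funext J
  have key : ∀ x : CM N,
      Dop N V (fun J => J (x.1, x.2, p₁) * pd N (x.1, x.2, p₂) f J
        - J (x.1, p₂, x.2) * pd N (x.1, p₁, x.2) f J) J
      = (J (x.1, x.2, p₁) * pd N (x.1, x.2, p₂) (Dop N V f) J
          - J (x.1, p₂, x.2) * pd N (x.1, p₁, x.2) (Dop N V f) J)
        + (Del N V (pd N (x.1, x.2, p₂) f) (x.1, x.2, p₁) J
            - Del N V (pd N (x.1, p₁, x.2) f) (x.1, p₂, x.2) J) := by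
    intro x
    rw [congrFun (Dop_sub (sm_coord_mul (pd_smooth hf (x.1, x.2, p₂)) (x.1, x.2, p₁))
      (sm_coord_mul (pd_smooth hf (x.1, p₁, x.2)) (x.1, p₂, x.2)) V) J]
    rw [congrFun (Dop_coord_mul (pd_smooth hf (x.1, x.2, p₂)) V (x.1, x.2, p₁)) J]
    rw [congrFun (Dop_coord_mul (pd_smooth hf (x.1, p₁, x.2)) V (x.1, p₂, x.2)) J]
    rw [← congrFun (pd_Dop_comm hf V (x.1, x.2, p₂)) J,
      ← congrFun (pd_Dop_comm hf V (x.1, p₁, x.2)) J]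
    ring
  rw [Finset.sum_congr rfl (fun x _ => key x), Finset.sum_add_distrib]
  have hz : ∑ x : CM N, (Del N V (pd N (x.1, x.2, p₂) f) (x.1, x.2, p₁) J
      - Del N V (pd N (x.1, p₁, x.2) f) (x.1, p₂, x.2) J) = 0 := by
    rw [Finset.sum_sub_distrib, cancel hf V p₁ p₂ J, sub_self]
  rw [hz, add_zero]

lemma L_Dop_comm {f : Fn N} (hf : Sm f) (V : ℝ) (p₁ p₂ : Fin (N + 1)) :
    Lfun N p₁ p₂ (Dop N V f) = Dop N V (Lfun N p₁ p₂ f) := by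
  unfold Lfun
  rw [Dop_sum (fun x (_ : x ∈ Finset.univ) =>
    pd_smooth (pd_smooth hf (x.1, x.2, p₂)) (x.1, p₁, x.2)) V]
  funext J
  refine Finset.sum_congr rfl fun x _ => ?_
  rw [pd_Dop_comm hf V (x.1, x.2, p₂), pd_Dop_comm (pd_smooth hf (x.1, x.2, p₂)) V (x.1, p₁, x.2)]

/-- Ward identity property for a single function coefficient. -/
def WardP (N : ℕ) (c : ℝ) (p₁ p₂ : Fin (N + 1)) (f : Fn N) : Prop :=
  Lfun N p₁ p₂ f = fun J => c * Tfun N p₁ p₂ f J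

lemma ward_step {f : Fn N} {c : ℝ} {p₁ p₂ : Fin (N + 1)} (hf : Sm f) (V : ℝ)
    (h : WardP N c p₁ p₂ f) : WardP N c p₁ p₂ (Dop N V f) := by
  unfold WardP at h ⊢
  rw [L_Dop_comm hf V p₁ p₂, h, Dop_const_mul (sm_Tfun hf p₁ p₂) c V,
    T_Dop_comm hf V p₁ p₂]

lemma Eev_pos {V μsq : ℝ} (hV : 0 < V) (hμ : 0 < μsq) (m : Fin (N + 1)) :
    0 < Eev N V μsq m := by
  unfold Eev
  positivity

lemma Hev_ne {V μsq : ℝ} (hV : 0 < V) (hμ : 0 < μsq) (n m : Fin (N + 1)) :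
    Hev N V μsq n m ≠ 0 :=
  ne_of_gt (add_pos (Eev_pos hV hμ n) (Eev_pos hV hμ m))

lemma Eev_sub_ne {V μsq : ℝ} (hV : 0 < V) {p₁ p₂ : Fin (N + 1)} (hp : p₁ ≠ p₂) :
    Eev N V μsq p₁ - Eev N V μsq p₂ ≠ 0 := by
  unfold Eev
  have h : ((p₁ : ℕ) : ℝ) ≠ ((p₂ : ℕ) : ℝ) := by
    exact_mod_cast fun h => hp (Fin.ext (by exact_mod_cast h))
  intro hcon
  apply h
  have hV' : V ≠ 0 := ne_of_gt hV
  field_simp at hcon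
  linarith

lemma ward_base {V μsq : ℝ} (hV : 0 < V) (hμ : 0 < μsq) {p₁ p₂ : Fin (N + 1)}
    (hp : p₁ ≠ p₂) :
    WardP N (V / (Eev N V μsq p₁ - Eev N V μsq p₂)) p₁ p₂ (Zfree N V μsq) := by
  unfold WardP Lfun Tfun
  funext J
  rw [Finset.mul_sum]
  refine Finset.sum_congr rfl fun x _ => ?_
  obtain ⟨a, m⟩ := x
  have h2 : pd N (a, m, p₂) (Zfree N V μsq)
      = fun J => 2 * cf N V μsq (a, m, p₂) * (J (a, p₂, m) * Zfree N V μsq J) :=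
    pd_Zfree V μsq (a, m, p₂)
  have h1 : pd N (a, p₁, m) (Zfree N V μsq)
      = fun J => 2 * cf N V μsq (a, p₁, m) * (J (a, m, p₁) * Zfree N V μsq J) :=
    pd_Zfree V μsq (a, p₁, m)
  rw [h2, h1]
  rw [pd_const_mul (sm_coord_mul (sm_Zfree V μsq) (a, p₂, m)).diff _ (a, p₁, m)]
  rw [pd_coord_mul (sm_Zfree V μsq).diff (a, p₁, m) (a, p₂, m)]
  have hne : ((a, p₁, m) : SrcIdx N) ≠ (a, p₂, m) := by
    intro h
    apply hp
    have := congrArg (fun z : SrcIdx N => z.2.1) h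
    exact this
  simp only [hne, if_false, h1, zero_add]
  simp only [cf, Hev]
  try dsimp only
  have e1 : Eev N V μsq p₁ + Eev N V μsq m ≠ 0 :=
    ne_of_gt (add_pos (Eev_pos hV hμ p₁) (Eev_pos hV hμ m))
  have e2 : Eev N V μsq m + Eev N V μsq p₂ ≠ 0 :=
    ne_of_gt (add_pos (Eev_pos hV hμ m) (Eev_pos hV hμ p₂))
  have e3 : Eev N V μsq p₁ - Eev N V μsq p₂ ≠ 0 := Eev_sub_ne hV hp
  field_simp
  ring

lemma sm_iter (V μsq : ℝ) (k : ℕ) : Sm ((Dop N V)^[k] (Zfree N V μsq)) := by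
  induction k with
  | zero => exact sm_Zfree V μsq
  | succ n ih => rw [Function.iterate_succ_apply']; exact sm_Dop ih V

lemma ward_iter {V μsq : ℝ} (hV : 0 < V) (hμ : 0 < μsq) {p₁ p₂ : Fin (N + 1)}
    (hp : p₁ ≠ p₂) (k : ℕ) :
    WardP N (V / (Eev N V μsq p₁ - Eev N V μsq p₂)) p₁ p₂ ((Dop N V)^[k] (Zfree N V μsq)) := by
  induction k with
  | zero => exact ward_base hV hμ hp
  | succ n ih =>
    rw [Function.iterate_succ_apply']
    exact ward_step (sm_iter V μsq n) V ih

end WT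
end
/-- Ward–Takahashi identity summed over colours: for `p₁ ≠ p₂`,
`Σ_a Σ_m ∂²Z/(∂J^a_{p₁m} ∂J^a_{mp₂})
  = (V/(E_{p₁} − E_{p₂})) Σ_a Σ_m (J^a_{mp₁} ∂Z/∂J^a_{mp₂} − J^a_{p₂m} ∂Z/∂J^a_{p₁m})`,
as formal power series in `λ'` with function coefficients. -/
theorem ward_takahashi_summed (N : ℕ) (V μsq : ℝ) (hV : 0 < V) (hμ : 0 < μsq)
    (p₁ p₂ : Fin (N + 1)) (hp : p₁ ≠ p₂) :
    (∑ a : Fin 3, ∑ m : Fin (N + 1),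
        Pd N (a, p₁, m) (Pd N (a, m, p₂) (Zser N V μsq)))
      = Cf N (fun _ => V / (Eev N V μsq p₁ - Eev N V μsq p₂)) *
          ∑ a : Fin 3, ∑ m : Fin (N + 1),
            (Cf N (fun J => J (a, m, p₁)) * Pd N (a, m, p₂) (Zser N V μsq)
              - Cf N (fun J => J (a, p₂, m)) * Pd N (a, p₁, m) (Zser N V μsq)) := by
  have hmain := WT.ward_iter (N := N) (V := V) (μsq := μsq) hV hμ hp
  apply PowerSeries.ext
  intro k
  simp only [map_sum, Cf, PowerSeries.coeff_C_mul, map_sub, Pd, Zser, PowerSeries.coeff_mk]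
  set s : ℝ := ((-1 : ℝ) ^ k / (Nat.factorial k : ℝ)) with hs
  set g : Fn N := (Dop N V)^[k] (Zfree N V μsq) with hgdef
  have hg : WT.Sm g := WT.sm_iter V μsq k
  have h1 : ∀ i : SrcIdx N, pd N i (fun J => s * g J) = fun J => s * pd N i g J :=
    fun i => WT.pd_const_mul hg.diff s i
  have h2 : ∀ i j : SrcIdx N, pd N i (pd N j (fun J => s * g J))
      = fun J => s * pd N i (pd N j g) J := by
    intro i j
    rw [h1 j, WT.pd_const_mul (WT.pd_smooth hg j).diff s i]
  simp only [h2]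
  simp only [h1]
  funext J
  simp only [Finset.sum_apply, Pi.mul_apply, Pi.sub_apply]
  set c : ℝ := V / (Eev N V μsq p₁ - Eev N V μsq p₂) with hc
  have key := congrFun (hmain k) J
  unfold WT.Lfun WT.Tfun at key
  have e : ∀ g' : WT.CM N → ℝ,
      (∑ x : WT.CM N, g' x) = ∑ a : Fin 3, ∑ m : Fin (N + 1), g' (a, m) :=
    fun g' => Fintype.sum_prod_type g'
  rw [e (fun x => pd N (x.1, p₁, x.2) (pd N (x.1, x.2, p₂) g) J),
    e (fun x => J (x.1, x.2, p₁) * pd N (x.1, x.2, p₂) g J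
      - J (x.1, p₂, x.2) * pd N (x.1, p₁, x.2) g J)] at key
  dsimp only at key
  have l1 : ∑ a : Fin 3, ∑ m : Fin (N + 1), s * pd N (a, p₁, m) (pd N (a, m, p₂) g) J
      = s * ∑ a : Fin 3, ∑ m : Fin (N + 1), pd N (a, p₁, m) (pd N (a, m, p₂) g) J := by
    rw [Finset.mul_sum]
    exact Finset.sum_congr rfl fun a _ => by rw [Finset.mul_sum]
  have r1 : ∑ a : Fin 3, ∑ m : Fin (N + 1),
        (J (a, m, p₁) * (s * pd N (a, m, p₂) g J) - J (a, p₂, m) * (s * pd N (a, p₁, m) g J))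
      = s * ∑ a : Fin 3, ∑ m : Fin (N + 1),
        (J (a, m, p₁) * pd N (a, m, p₂) g J - J (a, p₂, m) * pd N (a, p₁, m) g J) := by
    rw [Finset.mul_sum]
    refine Finset.sum_congr rfl fun a _ => ?_
    rw [Finset.mul_sum]
    refine Finset.sum_congr rfl fun m _ => ?_
    ring
  rw [l1, r1, key]
  ring
end

section
/- Second-order 2-point function of the 2D noncommutative 3-colour model: for all real p₁, p₂ ≥ 0 with p₁ ≠ p₂, lim_{Λ→∞} (1/((1+p₁+p₂)(p₁−p₂))) · [ (3/(1+p₁+p₂)) ∫₀^Λ ( 1/(1+p₂+q) − 1/(1+p₁+q) ) dq − ∫₀^Λ ( 1/(1+p₁+q) − 1/(1+p₁+p₂) )/(q−p₂) dq + ∫₀^Λ ( 1/(1+p₂+q) − 1/(1+p₁+p₂) )/(q−p₁) dq ] = 2(log(1+p₁) − log(1+p₂)) / ((1+p₁+p₂)²(p₁−p₂)). (The second and third integrands equal the smooth functions −1/((1+p₁+q)(1+p₁+p₂)) and −1/((1+p₂+q)(1+p₁+p₂)) respectively, so each cutoff integral is well defined.) -/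
open MeasureTheory Real Filter

lemma int_inv (c Λ : ℝ) (hc : 0 < c) (hΛ : 0 ≤ Λ) :
    ∫ q in (0:ℝ)..Λ, 1 / (c + q) = Real.log (c + Λ) - Real.log c := by
  have h : ∫ q in (0:ℝ)..Λ, 1 / (c + q) = ∫ x in c..(c+Λ), 1 / x := by
    simpa using intervalIntegral.integral_comp_add_left (a := (0:ℝ)) (b := Λ)
      (fun x => 1 / x) c
  rw [h, integral_one_div, Real.log_div (by positivity) (ne_of_gt hc)]
  simp only [Set.mem_uIcc]
  push_neg
  constructor <;> intro h1 <;> nlinarith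

lemma intble (c Λ : ℝ) (hc : 0 < c) (hΛ : 0 ≤ Λ) :
    IntervalIntegrable (fun q => 1 / (c + q)) volume 0 Λ := by
  apply ContinuousOn.intervalIntegrable
  apply ContinuousOn.div continuousOn_const (by fun_prop)
  intro x hx
  rcases Set.mem_uIcc.mp hx with ⟨h1, _⟩ | ⟨_, h2⟩ <;> nlinarith

lemma int_congr (a p Λ : ℝ) (ha : 0 < a) (hap : 0 < a + p) (hΛ : 0 ≤ Λ) :
    ∫ q in (0:ℝ)..Λ, (1/(a+q) - 1/(a+p))/(q - p)
      = -(1/(a+p)) * (Real.log (a+Λ) - Real.log a) := by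
  have hcongr : ∫ q in (0:ℝ)..Λ, (1/(a+q) - 1/(a+p))/(q - p)
      = ∫ q in (0:ℝ)..Λ, -(1/(a+p)) * (1/(a+q)) := by
    apply intervalIntegral.integral_congr_ae
    filter_upwards [compl_mem_ae_iff.mpr (measure_singleton p)] with q hq hq'
    have hqp : q ≠ p := by simpa using hq
    have hq1 : 0 < a + q := by
      rcases Set.mem_uIoc.mp hq' with ⟨h1, _⟩ | ⟨h1, _⟩ <;> nlinarith
    have h2 : q - p ≠ 0 := sub_ne_zero.mpr hqp
    field_simp
    ring
  rw [hcongr, intervalIntegral.integral_const_mul, int_inv a Λ ha hΛ]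

/-- Second-order 2-point function of the 2D noncommutative 3-colour model:
for all real `p₁, p₂ ≥ 0` with `p₁ ≠ p₂`, the cutoff expression obtained from the `n = 1`
instance of the recursion tends, as the cutoff `Λ → ∞`, to
`2(log(1+p₁) − log(1+p₂)) / ((1+p₁+p₂)²(p₁−p₂))`. -/
theorem second_order_two_point (p₁ p₂ : ℝ) (hp₁ : 0 ≤ p₁) (hp₂ : 0 ≤ p₂) (hne : p₁ ≠ p₂) :
    Tendsto (fun Λ : ℝ =>
      (1 / ((1 + p₁ + p₂) * (p₁ - p₂))) *
        ((3 / (1 + p₁ + p₂)) * (∫ q in (0:ℝ)..Λ, (1 / (1 + p₂ + q) - 1 / (1 + p₁ + q)))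
          - (∫ q in (0:ℝ)..Λ, (1 / (1 + p₁ + q) - 1 / (1 + p₁ + p₂)) / (q - p₂))
          + ∫ q in (0:ℝ)..Λ, (1 / (1 + p₂ + q) - 1 / (1 + p₁ + p₂)) / (q - p₁)))
      atTop
      (nhds (2 * (Real.log (1 + p₁) - Real.log (1 + p₂))
        / ((1 + p₁ + p₂) ^ 2 * (p₁ - p₂)))) := by
  set s : ℝ := 1 + p₁ + p₂ with hs_def
  have hs : (0:ℝ) < s := by positivity
  have ha : (0:ℝ) < 1 + p₁ := by linarith
  have hb : (0:ℝ) < 1 + p₂ := by linarith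
  set c : ℝ := 2 / (s ^ 2 * (p₁ - p₂)) with hc_def
  -- limit of the model function
  have hD : Tendsto (fun Λ : ℝ =>
      Real.log (1 + p₂ + Λ) - Real.log (1 + p₁ + Λ)) atTop (nhds 0) := by
    have h1 : Tendsto (fun Λ : ℝ => (1 + p₂ + Λ) / (1 + p₁ + Λ)) atTop (nhds 1) := by
      have h2 : Tendsto (fun Λ : ℝ => 1 + (p₂ - p₁) / (1 + p₁ + Λ)) atTop (nhds 1) := by
        have h3 : Tendsto (fun Λ : ℝ => (p₂ - p₁) / (1 + p₁ + Λ)) atTop (nhds 0) :=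
          Tendsto.div_atTop tendsto_const_nhds
            (tendsto_atTop_add_const_left _ _ tendsto_id)
        simpa using tendsto_const_nhds.add h3
      apply h2.congr'
      filter_upwards [eventually_ge_atTop (0:ℝ)] with Λ hΛ
      have : (1 + p₁ + Λ) ≠ 0 := by positivity
      field_simp
      ring
    have hlog : Tendsto (fun Λ : ℝ => Real.log ((1 + p₂ + Λ) / (1 + p₁ + Λ)))
        atTop (nhds 0) := by
      have := (Real.continuousAt_log one_ne_zero).tendsto.comp h1
      simpa [Function.comp_def] using this
    apply hlog.congr'
    filter_upwards [eventually_ge_atTop (0:ℝ)] with Λ hΛ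
    rw [Real.log_div (by positivity) (by positivity)]
  have hmodel : Tendsto (fun Λ : ℝ =>
      c * ((Real.log (1 + p₂ + Λ) - Real.log (1 + p₁ + Λ))
        + (Real.log (1 + p₁) - Real.log (1 + p₂)))) atTop
      (nhds (2 * (Real.log (1 + p₁) - Real.log (1 + p₂)) / (s ^ 2 * (p₁ - p₂)))) := by
    have := (hD.add (tendsto_const_nhds (x := Real.log (1 + p₁) - Real.log (1 + p₂)))).const_mul c
    simpa [hc_def, zero_add, div_eq_mul_inv, mul_comm, mul_assoc, mul_left_comm] using this
  apply hmodel.congr'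
  filter_upwards [eventually_ge_atTop (0:ℝ)] with Λ hΛ
  have hI1 : ∫ q in (0:ℝ)..Λ, (1 / (1 + p₂ + q) - 1 / (1 + p₁ + q))
      = (Real.log (1 + p₂ + Λ) - Real.log (1 + p₂))
        - (Real.log (1 + p₁ + Λ) - Real.log (1 + p₁)) := by
    rw [intervalIntegral.integral_sub (intble _ _ hb hΛ) (intble _ _ ha hΛ),
      int_inv _ _ hb hΛ, int_inv _ _ ha hΛ]
  have hI2 : ∫ q in (0:ℝ)..Λ, (1 / (1 + p₁ + q) - 1 / (1 + p₁ + p₂)) / (q - p₂)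
      = -(1/(1 + p₁ + p₂)) * (Real.log (1 + p₁ + Λ) - Real.log (1 + p₁)) := by
    have := int_congr (1 + p₁) p₂ Λ ha (by linarith) hΛ
    simpa [add_assoc] using this
  have hI3 : ∫ q in (0:ℝ)..Λ, (1 / (1 + p₂ + q) - 1 / (1 + p₁ + p₂)) / (q - p₁)
      = -(1/(1 + p₁ + p₂)) * (Real.log (1 + p₂ + Λ) - Real.log (1 + p₂)) := by
    have := int_congr (1 + p₂) p₁ Λ hb (by linarith) hΛ
    have e : 1 + p₂ + p₁ = 1 + p₁ + p₂ := by ring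
    simpa [add_assoc, e] using this
  rw [hI1, hI2, hI3]
  have hsne : s ≠ 0 := ne_of_gt hs
  have hpne : p₁ - p₂ ≠ 0 := sub_ne_zero.mpr hne
  rw [hc_def]
  field_simp
  ring
end
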